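/- arXiv:2210.13662 — 2 statements merged into one kernel-verified Lean document; each statement's English description precedes it below -/
import Mathlib

section
/- For the randomized response mechanism with uniform input distribution on M values, the mutual information equals I(X;Y) = log M - h(q - q/M) - (q - q/M)·log(M-1), where h is the binary entropy function. -/
open Real

/-- Transition kernel of the generalized randomized response mechanism. -/
noncomputable def rrChannel (M : ℕ) (q : ℝ) (x y : Fin M) : ℝ :=
  if y = x then 1 - q + q / M else q / M

/-- Mutual information between the input `X ~ p` and the output of channel `Q`:
`I(X;Y) = Σ_{x,y} P(x,y) log(P(x,y)/(P(x)P(y)))`. -/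
noncomputable def mutualInfo {α β : Type*} [Fintype α] [Fintype β]
    (p : α → ℝ) (Q : α → β → ℝ) : ℝ :=
  ∑ x, ∑ y, (p x * Q x y) *
    Real.log ((p x * Q x y) / (p x * (∑ x', p x' * Q x' y)))

/-- For randomized response with uniform input distribution on `M ≥ 2` values
and `0 < q < 1`, the mutual information equals
`I(X;Y) = log M - h(q - q/M) - (q - q/M) log(M-1)`,
where `h(t) = -t log t - (1-t) log(1-t)` is the binary entropy. -/
theorem rr_mutualInfo (M : ℕ) (hM : 2 ≤ M) (q : ℝ) (hq0 : 0 < q) (hq1 : q < 1) :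
    mutualInfo (fun _ : Fin M => 1 / M) (rrChannel M q) =
      Real.log M
        - (Real.negMulLog (q - q / M) + Real.negMulLog (1 - (q - q / M)))
        - (q - q / M) * Real.log (M - 1) := by
  have hMr : (1:ℝ) < M := by exact_mod_cast lt_of_lt_of_le one_lt_two hM
  have hM0 : (0:ℝ) < M := by linarith
  have hMne : (M:ℝ) ≠ 0 := ne_of_gt hM0
  have hM1ne : (M:ℝ) - 1 ≠ 0 := ne_of_gt (by linarith)
  have hb : (0:ℝ) < q / M := div_pos hq0 hM0
  have ha : (0:ℝ) < 1 - q + q / M := by linarith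
  have htpos : (0:ℝ) < q - q / M := by
    have h : q / M < q := by rw [div_lt_iff₀ hM0]; nlinarith
    linarith
  have htne : q - q / (M:ℝ) ≠ 0 := ne_of_gt htpos
  -- marginal distribution of Y is uniform
  have hmarg : ∀ y : Fin M, ∑ x' : Fin M, (1/(M:ℝ)) * rrChannel M q x' y = 1/M := by
    intro y
    have key : ∀ x' : Fin M, (1/(M:ℝ)) * rrChannel M q x' y =
        (1/(M:ℝ)) * (q/M) + (if y = x' then (1/(M:ℝ)) * (1 - q) else 0) := by
      intro x'; unfold rrChannel; split <;> ring
    simp only [key, Finset.sum_add_distrib, Finset.sum_const, Finset.card_univ,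
      Fintype.card_fin, nsmul_eq_mul, Finset.sum_ite_eq, Finset.mem_univ, if_true]
    field_simp
    ring
  -- simplify each summand
  have hterm : ∀ x y : Fin M,
      ((1/(M:ℝ)) * rrChannel M q x y) *
        Real.log (((1/(M:ℝ)) * rrChannel M q x y) /
          ((1/(M:ℝ)) * ∑ x' : Fin M, (1/(M:ℝ)) * rrChannel M q x' y)) =
      (1/(M:ℝ)) * (rrChannel M q x y * Real.log ((M:ℝ) * rrChannel M q x y)) := by
    intro x y
    rw [hmarg y]
    have harg : ((1/(M:ℝ)) * rrChannel M q x y) / ((1/(M:ℝ)) * (1/(M:ℝ)))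
        = (M:ℝ) * rrChannel M q x y := by
      field_simp
    rw [harg]; ring
  have key2 : ∀ x y : Fin M, rrChannel M q x y * Real.log ((M:ℝ) * rrChannel M q x y) =
      (q/M) * Real.log q + (if y = x then
        ((1 - q + q/M) * Real.log ((M:ℝ) * (1 - q + q/M)) - (q/M) * Real.log q) else 0) := by
    intro x y; unfold rrChannel
    by_cases h : y = x
    · simp only [h, if_true]; ring
    · simp only [h, if_false]
      rw [show (M:ℝ) * (q/M) = q from by field_simp]
      ring
  have hinner : ∀ x : Fin M,
      ∑ y : Fin M, (1/(M:ℝ)) * (rrChannel M q x y * Real.log ((M:ℝ) * rrChannel M q x y)) =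
      (1/(M:ℝ)) * (q * Real.log q +
        ((1 - q + q/M) * Real.log ((M:ℝ) * (1 - q + q/M)) - (q/M) * Real.log q)) := by
    intro x
    rw [← Finset.mul_sum]
    congr 1
    simp only [key2 x, Finset.sum_add_distrib, Finset.sum_const, Finset.card_univ,
      Fintype.card_fin, nsmul_eq_mul, Finset.sum_ite_eq', Finset.mem_univ, if_true]
    congr 1
    field_simp
  unfold mutualInfo
  simp only [hterm, hinner, Finset.sum_const, Finset.card_univ, Fintype.card_fin,
    nsmul_eq_mul]
  -- pure log algebra
  have hq' : q = (q - q/M) * M / ((M:ℝ) - 1) := by field_simp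
  have hlogq : Real.log q = Real.log (q - q/M) + Real.log M - Real.log ((M:ℝ) - 1) := by
    nth_rewrite 1 [hq']
    rw [mul_div_assoc, Real.log_mul htne (div_ne_zero hMne hM1ne),
      Real.log_div hMne hM1ne]
    ring
  have hloga : Real.log ((M:ℝ) * (1 - q + q/M)) = Real.log M + Real.log (1 - q + q/M) :=
    Real.log_mul hMne (ne_of_gt ha)
  rw [show (1:ℝ) - (q - q/M) = 1 - q + q/M from by ring]
  simp only [Real.negMulLog, hlogq, hloga]
  field_simp
  ring
end

section
/- Let Y be a mixture of M isotropic Gaussians on ℝ^d: Y has density Σ_m p_m φ(y; e_m, σ²I), with Δ = max_{m,l}‖e_m - e_l‖. Then I(X;Y) ≤ -Σ_m p_m · log(p_m + (1-p_m)·exp(-Δ²/(2σ²))), where X ~ Categorical(p) is the mixture index and Yated X=m is N(e_m, σ²I). -/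
open Real MeasureTheory

/-- Density of the isotropic Gaussian `N(e, σ²I)` on `ℝ^d`. -/
noncomputable def gaussPDF (d : ℕ) (σ : ℝ) (e : EuclideanSpace ℝ (Fin d))
    (y : EuclideanSpace ℝ (Fin d)) : ℝ :=
  (2 * Real.pi * σ ^ 2) ^ (-(d : ℝ) / 2) * Real.exp (-‖y - e‖ ^ 2 / (2 * σ ^ 2))

open Filter


lemma integrable_sq_mul_exp {b : ℝ} (hb : 0 < b) :
    Integrable (fun x : ℝ => x ^ 2 * rexp (-b * x ^ 2)) := by
  have := integrable_rpow_mul_exp_neg_mul_sq hb (s := 2) (by norm_num)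
  simpa [Real.rpow_natCast] using this

lemma gauss_moment2_1d {b : ℝ} (hb : 0 < b) :
    ∫ x : ℝ, x ^ 2 * rexp (-b * x ^ 2) = (∫ x : ℝ, rexp (-b * x ^ 2)) / (2 * b) := by
  have hderiv : ∀ x ∈ Set.Ioi (0:ℝ), HasDerivAt (fun x : ℝ => x * rexp (-b * x ^ 2))
      (rexp (-b * x ^ 2) - 2 * b * (x ^ 2 * rexp (-b * x ^ 2))) x := by
    intro x _
    have h1 : HasDerivAt (fun x : ℝ => -b * x ^ 2) (-b * (2 * x)) x := by
      simpa using ((hasDerivAt_pow 2 x).const_mul (-b))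
    have : HasDerivAt (fun x : ℝ => x * rexp (-b * x ^ 2))
        (1 * rexp (-b * x ^ 2) + x * (rexp (-b * x ^ 2) * (-b * (2 * x)))) x :=
      (hasDerivAt_id' x).mul h1.exp
    convert this using 1
    ring
  have hint0 : Integrable (fun x : ℝ => rexp (-b * x ^ 2)) := integrable_exp_neg_mul_sq hb
  have hint2 := integrable_sq_mul_exp hb
  have f'int : IntegrableOn
      (fun x : ℝ => rexp (-b * x ^ 2) - 2 * b * (x ^ 2 * rexp (-b * x ^ 2)))
      (Set.Ioi 0) := (hint0.sub (hint2.const_mul (2*b))).integrableOn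
  have htends : Tendsto (fun x : ℝ => x * rexp (-b * x ^ 2)) atTop (nhds 0) := by
    have h := rpow_mul_exp_neg_mul_sq_isLittleO_exp_neg hb 1
    have h2 : Tendsto (fun x : ℝ => rexp (-(1/2) * x)) atTop (nhds 0) := by
      have hm : Tendsto (fun x : ℝ => (1/2) * x) atTop atTop := by
        apply Tendsto.const_mul_atTop (by norm_num : (0:ℝ) < 1/2) tendsto_id
      have h3 := Real.tendsto_exp_neg_atTop_nhds_zero.comp hm
      have h4 : ((fun x : ℝ => rexp (-x)) ∘ fun x : ℝ => 1/2 * x)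
          = fun x : ℝ => rexp (-(1/2) * x) := by
        funext x; simp [Function.comp, neg_mul]
      rwa [h4] at h3
    have := h.isBigO.trans_tendsto h2
    refine this.congr' ?_
    filter_upwards [eventually_ge_atTop (0:ℝ)] with x hx
    rw [Real.rpow_one]
  have key := integral_Ioi_of_hasDerivAt_of_tendsto
    (f := fun x : ℝ => x * rexp (-b * x ^ 2)) (a := 0)
    (Continuous.continuousWithinAt (by fun_prop)) hderiv f'int htends
  simp only [ne_eq, zero_mul, sub_zero] at key
  rw [MeasureTheory.integral_sub hint0.integrableOn (hint2.const_mul (2*b)).integrableOn] at key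
  have key2 : ∫ x in Set.Ioi (0:ℝ), 2 * b * (x ^ 2 * rexp (-b * x ^ 2))
      = ∫ x in Set.Ioi (0:ℝ), rexp (-b * x ^ 2) := by linarith
  rw [MeasureTheory.integral_const_mul] at key2
  have e0 : ∫ x : ℝ, rexp (-b * x ^ 2) = 2 * ∫ x in Set.Ioi (0:ℝ), rexp (-b * x ^ 2) := by
    rw [← integral_comp_abs (f := fun t => rexp (-b * t ^ 2))]
    simp [sq_abs]
  have e2 : ∫ x : ℝ, x ^ 2 * rexp (-b * x ^ 2)
      = 2 * ∫ x in Set.Ioi (0:ℝ), x ^ 2 * rexp (-b * x ^ 2) := by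
    rw [← integral_comp_abs (f := fun t => t ^ 2 * rexp (-b * t ^ 2))]
    simp [sq_abs]
  rw [e0, e2, eq_div_iff (by positivity : (2:ℝ) * b ≠ 0)]
  linarith

lemma gauss_moment2 (d : ℕ) {b : ℝ} (hb : 0 < b) :
    ∫ v : EuclideanSpace ℝ (Fin d), ‖v‖ ^ 2 * rexp (-b * ‖v‖ ^ 2)
      = ((d : ℝ) / (2 * b)) * (π / b) ^ ((d : ℝ) / 2) := by
  have hT := (EuclideanSpace.volume_preserving_symm_measurableEquiv_toLp (Fin d)).symm
  rw [← hT.integral_comp (MeasurableEquiv.measurableEmbedding _)]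
  have hnorm : ∀ x : Fin d → ℝ,
      ‖(MeasurableEquiv.toLp 2 (Fin d → ℝ)).symm.symm x‖ ^ 2 = ∑ i, x i ^ 2 := by
    intro x
    simp only [MeasurableEquiv.symm_symm, MeasurableEquiv.coe_toLp,
      EuclideanSpace.norm_eq, Real.norm_eq_abs, sq_abs]
    rw [sq_sqrt]
    exact Finset.sum_nonneg fun i _ => sq_nonneg _
  have hfun : ∀ x : Fin d → ℝ,
      (‖(MeasurableEquiv.toLp 2 (Fin d → ℝ)).symm.symm x‖ ^ 2
          * rexp (-b * ‖(MeasurableEquiv.toLp 2 (Fin d → ℝ)).symm.symm x‖ ^ 2))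
        = ∑ i, ∏ j, ((if j = i then (x j) ^ 2 else 1) * rexp (-b * (x j) ^ 2)) := by
    intro x
    rw [hnorm]
    have hexp : ∀ i : Fin d, (∏ j, ((if j = i then (x j) ^ 2 else 1) * rexp (-b * (x j) ^ 2)))
        = (x i) ^ 2 * rexp (-b * ∑ j, (x j) ^ 2) := by
      intro i
      rw [Finset.prod_mul_distrib, Finset.prod_ite_eq' Finset.univ i (fun j => (x j) ^ 2)]
      simp only [Finset.mem_univ, if_true]
      rw [Finset.mul_sum, Real.exp_sum]
    simp only [hexp]
    rw [← Finset.sum_mul]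
  simp only [Function.comp_def, hfun]
  have hint1d : ∀ i j : Fin d,
      Integrable (fun t : ℝ => (if j = i then t ^ 2 else 1) * rexp (-b * t ^ 2)) := by
    intro i j
    by_cases h : j = i
    · simpa [h, neg_mul] using integrable_sq_mul_exp hb
    · simpa [h, neg_mul] using integrable_exp_neg_mul_sq hb
  rw [integral_finset_sum (μ := volume) _ (fun i _ => Integrable.fintype_prod (fun j => hint1d i j))]
  have hval : ∀ i : Fin d,
      (∫ x : Fin d → ℝ, ∏ j, ((if j = i then (x j) ^ 2 else 1) * rexp (-b * (x j) ^ 2)))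
        = (1 / (2 * b)) * (∫ t : ℝ, rexp (-b * t ^ 2)) ^ d := by
    intro i
    rw [MeasureTheory.volume_pi, integral_fintype_prod_eq_prod (f := fun (j : Fin d) (t : ℝ) =>
      (if j = i then t ^ 2 else 1) * rexp (-b * t ^ 2))]
    have : ∀ j : Fin d, (∫ t : ℝ, (if j = i then t ^ 2 else 1) * rexp (-b * t ^ 2))
        = (if j = i then (1 / (2 * b)) else 1) * ∫ t : ℝ, rexp (-b * t ^ 2) := by
      intro j
      by_cases h : j = i
      · simp only [h, if_true]
        rw [gauss_moment2_1d hb]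
        ring
      · simp [h]
    simp only [this]
    rw [Finset.prod_mul_distrib, Finset.prod_ite_eq' Finset.univ i (fun _ => (1 / (2*b) : ℝ))]
    simp [Finset.prod_const]
  simp only [hval, Finset.sum_const, Finset.card_univ, Fintype.card_fin, nsmul_eq_mul]
  rw [integral_gaussian]
  rw [Real.sqrt_eq_rpow]
  rw [← Real.rpow_natCast ((π / b) ^ ((1/2 : ℝ))) d, ← Real.rpow_mul (by positivity)]
  rw [show (1/2 : ℝ) * (d : ℝ) = (d : ℝ) / 2 by ring]
  ring

variable {d : ℕ} {σ : ℝ}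

lemma gaussPDF_eq (e y : EuclideanSpace ℝ (Fin d)) :
    gaussPDF d σ e y
      = (2 * π * σ ^ 2) ^ (-(d : ℝ) / 2) * rexp (-(2 * σ ^ 2)⁻¹ * ‖y - e‖ ^ 2) := by
  unfold gaussPDF
  congr 1
  rw [neg_div, div_eq_mul_inv, mul_comm, neg_mul]

lemma gaussPDF_pos (hσ : 0 < σ) (e y : EuclideanSpace ℝ (Fin d)) : 0 < gaussPDF d σ e y := by
  unfold gaussPDF
  have : (0:ℝ) < 2 * π * σ ^ 2 := by positivity
  positivity

lemma hb_pos (hσ : 0 < σ) : (0:ℝ) < (2 * σ ^ 2)⁻¹ := by positivity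

lemma C_mul_rpow (hσ : 0 < σ) :
    (2 * π * σ ^ 2) ^ (-(d : ℝ) / 2) * (π / (2 * σ ^ 2)⁻¹) ^ ((d : ℝ) / 2) = 1 := by
  have h1 : π / (2 * σ ^ 2)⁻¹ = 2 * π * σ ^ 2 := by
    field_simp
  have h2 : (0:ℝ) < 2 * π * σ ^ 2 := by positivity
  rw [h1, neg_div, Real.rpow_neg h2.le, inv_mul_cancel₀ (by positivity)]

lemma finrank_E : (Module.finrank ℝ (EuclideanSpace ℝ (Fin d)) : ℝ) = (d : ℝ) := by
  rw [finrank_euclideanSpace_fin]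

lemma gauss_integral_centered (hσ : 0 < σ) :
    ∫ y : EuclideanSpace ℝ (Fin d), rexp (-(2 * σ ^ 2)⁻¹ * ‖y‖ ^ 2)
      = (π / (2 * σ ^ 2)⁻¹) ^ ((d : ℝ) / 2) := by
  rw [GaussianFourier.integral_rexp_neg_mul_sq_norm (hb_pos hσ)]
  norm_num [finrank_euclideanSpace_fin]

lemma gaussPDF_integral (hσ : 0 < σ) (e : EuclideanSpace ℝ (Fin d)) :
    ∫ y, gaussPDF d σ e y = 1 := by
  simp_rw [gaussPDF_eq]
  rw [MeasureTheory.integral_const_mul]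
  rw [show (fun y : EuclideanSpace ℝ (Fin d) => rexp (-(2 * σ ^ 2)⁻¹ * ‖y - e‖ ^ 2))
      = fun y => (fun z : EuclideanSpace ℝ (Fin d) => rexp (-(2 * σ ^ 2)⁻¹ * ‖z‖ ^ 2)) (y - e)
      from rfl]
  rw [integral_sub_right_eq_self (fun z : EuclideanSpace ℝ (Fin d) =>
    rexp (-(2 * σ ^ 2)⁻¹ * ‖z‖ ^ 2)) e]
  rw [gauss_integral_centered hσ, C_mul_rpow hσ]

lemma integrable_exp_norm_sq {b : ℝ} (hb : 0 < b) :
    Integrable (fun z : EuclideanSpace ℝ (Fin d) => rexp (-b * ‖z‖ ^ 2)) := by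
  have hT := (EuclideanSpace.volume_preserving_symm_measurableEquiv_toLp (Fin d)).symm
  rw [← hT.integrable_comp_emb (MeasurableEquiv.measurableEmbedding _)]
  have hnorm : ∀ x : Fin d → ℝ,
      ‖(MeasurableEquiv.toLp 2 (Fin d → ℝ)).symm.symm x‖ ^ 2 = ∑ i, x i ^ 2 := by
    intro x
    simp only [MeasurableEquiv.symm_symm, MeasurableEquiv.coe_toLp,
      EuclideanSpace.norm_eq, Real.norm_eq_abs, sq_abs]
    rw [sq_sqrt]
    exact Finset.sum_nonneg fun i _ => sq_nonneg _
  have hprod : Integrable (fun x : Fin d → ℝ => ∏ j, rexp (-b * (x j) ^ 2)) :=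
    Integrable.fintype_prod (fun _ => integrable_exp_neg_mul_sq hb)
  refine hprod.congr (Filter.Eventually.of_forall fun x => ?_)
  simp only [Function.comp_apply]
  rw [hnorm, Finset.mul_sum, Real.exp_sum]

lemma exp_norm_integrable (hσ : 0 < σ) (e : EuclideanSpace ℝ (Fin d)) :
    Integrable (fun y : EuclideanSpace ℝ (Fin d) => rexp (-(2 * σ ^ 2)⁻¹ * ‖y - e‖ ^ 2)) := by
  have h := integrable_exp_norm_sq (d := d) (hb_pos hσ)
  have := (measurePreserving_sub_right (volume : Measure (EuclideanSpace ℝ (Fin d))) e).integrable_comp h.aestronglyMeasurable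
  exact this.mpr h

lemma gaussPDF_integrable (hσ : 0 < σ) (e : EuclideanSpace ℝ (Fin d)) :
    Integrable (gaussPDF d σ e) := by
  have := (exp_norm_integrable hσ e).const_mul ((2 * π * σ ^ 2) ^ (-(d : ℝ) / 2))
  exact this.congr (Filter.Eventually.of_forall fun y => (gaussPDF_eq e y).symm)

lemma sq_mul_exp_le {b t : ℝ} (hb : 0 < b) (ht : 0 ≤ t) :
    t * rexp (-b * t) ≤ (2 / b) * rexp (-(b / 2) * t) := by
  rw [show -b * t = -(b/2) * t + -(b/2) * t by ring, Real.exp_add, ← mul_assoc]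
  have h1 : t * rexp (-(b/2) * t) ≤ 2 / b := by
    rcases eq_or_lt_of_le ht with h | h
    · simp [← h]; positivity
    · rw [neg_mul, Real.exp_neg]
      rw [mul_comm, inv_mul_le_iff₀ (Real.exp_pos _), ← div_le_iff₀ (by positivity)]
      calc t / (2/b) = (b/2) * t := by field_simp
        _ ≤ rexp ((b/2) * t) := by
            have := Real.add_one_le_exp ((b/2) * t)
            nlinarith [Real.exp_pos ((b/2)*t)]
  calc t * rexp (-(b/2)*t) * rexp (-(b/2)*t) ≤ (2/b) * rexp (-(b/2)*t) :=
        mul_le_mul_of_nonneg_right h1 (Real.exp_pos _).le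
    _ = _ := rfl

lemma integrable_exp_norm_sq_mul_sq {b : ℝ} (hb : 0 < b) (e c : EuclideanSpace ℝ (Fin d)) :
    Integrable (fun y : EuclideanSpace ℝ (Fin d) =>
      rexp (-b * ‖y - e‖ ^ 2) * ‖y - c‖ ^ 2) := by
  have hmeas : AEStronglyMeasurable (fun y : EuclideanSpace ℝ (Fin d) =>
      rexp (-b * ‖y - e‖ ^ 2) * ‖y - c‖ ^ 2) volume := by
    apply Continuous.aestronglyMeasurable
    fun_prop
  have hint : Integrable (fun y : EuclideanSpace ℝ (Fin d) =>
      (2 * ‖e - c‖ ^ 2 + 2 * (2 / b)) * rexp (-(b/2) * ‖y - e‖ ^ 2)) := by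
    apply Integrable.const_mul
    have h := integrable_exp_norm_sq (d := d) (show (0:ℝ) < b/2 by positivity)
    have := (measurePreserving_sub_right (volume : Measure (EuclideanSpace ℝ (Fin d))) e).integrable_comp h.aestronglyMeasurable
    exact this.mpr h
  refine hint.mono' hmeas (Filter.Eventually.of_forall fun y => ?_)
  have hyc : ‖y - c‖ ^ 2 ≤ 2 * ‖y - e‖ ^ 2 + 2 * ‖e - c‖ ^ 2 := by
    have h1 : ‖y - c‖ ≤ ‖y - e‖ + ‖e - c‖ := by
      have := norm_add_le (y - e) (e - c)
      simpa [sub_add_sub_cancel] using this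
    have h2 : ‖y - c‖ ^ 2 ≤ (‖y - e‖ + ‖e - c‖) ^ 2 :=
      pow_le_pow_left₀ (norm_nonneg _) h1 2
    nlinarith [sq_nonneg (‖y - e‖ - ‖e - c‖)]
  have hexp_pos := Real.exp_pos (-b * ‖y - e‖ ^ 2)
  rw [Real.norm_eq_abs, abs_of_nonneg (by positivity)]
  calc rexp (-b * ‖y - e‖ ^ 2) * ‖y - c‖ ^ 2
      ≤ rexp (-b * ‖y - e‖ ^ 2) * (2 * ‖y - e‖ ^ 2 + 2 * ‖e - c‖ ^ 2) :=
        mul_le_mul_of_nonneg_left hyc hexp_pos.le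
    _ = 2 * (‖y - e‖ ^ 2 * rexp (-b * ‖y - e‖ ^ 2))
        + 2 * ‖e - c‖ ^ 2 * rexp (-b * ‖y - e‖ ^ 2) := by ring
    _ ≤ 2 * ((2 / b) * rexp (-(b/2) * ‖y - e‖ ^ 2))
        + 2 * ‖e - c‖ ^ 2 * rexp (-(b/2) * ‖y - e‖ ^ 2) := by
        have h2 := sq_mul_exp_le hb (sq_nonneg ‖y - e‖)
        have h3 : rexp (-b * ‖y - e‖ ^ 2) ≤ rexp (-(b/2) * ‖y - e‖ ^ 2) := by
          apply Real.exp_le_exp.mpr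
          nlinarith [sq_nonneg ‖y - e‖]
        have h4 : (0:ℝ) ≤ 2 * ‖e - c‖ ^ 2 := by positivity
        nlinarith
    _ = (2 * ‖e - c‖ ^ 2 + 2 * (2 / b)) * rexp (-(b/2) * ‖y - e‖ ^ 2) := by ring

lemma integrable_exp_norm_sq_mul_inner {b : ℝ} (hb : 0 < b) (a : EuclideanSpace ℝ (Fin d)) :
    Integrable (fun z : EuclideanSpace ℝ (Fin d) =>
      rexp (-b * ‖z‖ ^ 2) * (inner ℝ z a : ℝ)) := by
  have hmeas : AEStronglyMeasurable (fun z : EuclideanSpace ℝ (Fin d) =>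
      rexp (-b * ‖z‖ ^ 2) * (inner ℝ z a : ℝ)) volume := by
    apply Continuous.aestronglyMeasurable
    exact (Real.continuous_exp.comp (by fun_prop)).mul (continuous_id.inner continuous_const)
  have hint : Integrable (fun z : EuclideanSpace ℝ (Fin d) =>
      ‖a‖ * (rexp (-b * ‖z‖ ^ 2) + rexp (-b * ‖z - 0‖ ^ 2) * ‖z - 0‖ ^ 2)) := by
    apply Integrable.const_mul
    exact (integrable_exp_norm_sq hb).add (integrable_exp_norm_sq_mul_sq hb 0 0)
  refine hint.mono' hmeas (Filter.Eventually.of_forall fun z => ?_)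
  simp only [sub_zero]
  rw [Real.norm_eq_abs, abs_mul, abs_of_nonneg (Real.exp_pos _).le]
  have h1 : |(inner ℝ z a : ℝ)| ≤ ‖z‖ * ‖a‖ := abs_real_inner_le_norm z a
  have h2 : ‖z‖ ≤ 1 + ‖z‖ ^ 2 := by nlinarith [norm_nonneg z, sq_nonneg (‖z‖ - 1)]
  have hexp := (Real.exp_pos (-b * ‖z‖ ^ 2)).le
  calc rexp (-b * ‖z‖ ^ 2) * |(inner ℝ z a : ℝ)|
      ≤ rexp (-b * ‖z‖ ^ 2) * (‖z‖ * ‖a‖) := mul_le_mul_of_nonneg_left h1 hexp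
    _ ≤ rexp (-b * ‖z‖ ^ 2) * ((1 + ‖z‖ ^ 2) * ‖a‖) := by
        have := mul_le_mul_of_nonneg_right h2 (norm_nonneg a)
        exact mul_le_mul_of_nonneg_left this hexp
    _ = ‖a‖ * (rexp (-b * ‖z‖ ^ 2) + rexp (-b * ‖z‖ ^ 2) * ‖z‖ ^ 2) := by ring

lemma integral_exp_norm_sq_mul_inner {b : ℝ} (a : EuclideanSpace ℝ (Fin d)) :
    ∫ z : EuclideanSpace ℝ (Fin d), rexp (-b * ‖z‖ ^ 2) * (inner ℝ z a : ℝ) = 0 := by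
  have hodd := integral_neg_eq_self
    (fun z : EuclideanSpace ℝ (Fin d) => rexp (-b * ‖z‖ ^ 2) * (inner ℝ z a : ℝ))
    (volume : Measure (EuclideanSpace ℝ (Fin d)))
  simp only [norm_neg, inner_neg_left, mul_neg] at hodd
  rw [MeasureTheory.integral_neg] at hodd
  linarith

lemma gaussPDF_mul_sq_integrable (hσ : 0 < σ) (e c : EuclideanSpace ℝ (Fin d)) :
    Integrable (fun y => gaussPDF d σ e y * ‖y - c‖ ^ 2) := by
  have h := (integrable_exp_norm_sq_mul_sq (d := d) (hb_pos hσ) e c).const_mul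
    ((2 * π * σ ^ 2) ^ (-(d : ℝ) / 2))
  refine h.congr (Filter.Eventually.of_forall fun y => ?_)
  simp only [gaussPDF_eq]; ring

lemma gaussPDF_moment (hσ : 0 < σ) (e c : EuclideanSpace ℝ (Fin d)) :
    ∫ y, gaussPDF d σ e y * ‖y - c‖ ^ 2 = (d : ℝ) * σ ^ 2 + ‖e - c‖ ^ 2 := by
  have hb := hb_pos hσ
  set b : ℝ := (2 * σ ^ 2)⁻¹ with hbdef
  have step1 : (fun y : EuclideanSpace ℝ (Fin d) => gaussPDF d σ e y * ‖y - c‖ ^ 2)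
      = fun y => (2 * π * σ ^ 2) ^ (-(d : ℝ) / 2) *
          ((fun z : EuclideanSpace ℝ (Fin d) => rexp (-b * ‖z‖ ^ 2) * ‖z + (e - c)‖ ^ 2) (y - e)) := by
    funext y
    rw [gaussPDF_eq, mul_assoc]
    congr 3
    rw [sub_add_sub_cancel]
  rw [step1, MeasureTheory.integral_const_mul,
    integral_sub_right_eq_self
      (fun z : EuclideanSpace ℝ (Fin d) => rexp (-b * ‖z‖ ^ 2) * ‖z + (e - c)‖ ^ 2) e]
  have expand : (fun z : EuclideanSpace ℝ (Fin d) => rexp (-b * ‖z‖ ^ 2) * ‖z + (e - c)‖ ^ 2)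
      = fun z => (‖z‖ ^ 2 * rexp (-b * ‖z‖ ^ 2)
          + 2 * (rexp (-b * ‖z‖ ^ 2) * (inner ℝ z (e - c) : ℝ)))
          + ‖e - c‖ ^ 2 * rexp (-b * ‖z‖ ^ 2) := by
    funext z
    rw [norm_add_sq_real]
    ring
  rw [expand]
  have i1 : Integrable (fun z : EuclideanSpace ℝ (Fin d) => ‖z‖ ^ 2 * rexp (-b * ‖z‖ ^ 2)) := by
    refine (integrable_exp_norm_sq_mul_sq (d := d) hb 0 0).congr
      (Filter.Eventually.of_forall fun z => ?_)
    simp [mul_comm]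
  have i2 := (integrable_exp_norm_sq_mul_inner (d := d) hb (e - c)).const_mul 2
  have i3 := (integrable_exp_norm_sq (d := d) hb).const_mul (‖e - c‖ ^ 2)
  have i12 : Integrable (fun z : EuclideanSpace ℝ (Fin d) =>
      ‖z‖ ^ 2 * rexp (-b * ‖z‖ ^ 2) + 2 * (rexp (-b * ‖z‖ ^ 2) * (inner ℝ z (e - c) : ℝ))) := by
    exact i1.add i2
  rw [MeasureTheory.integral_add i12 i3, MeasureTheory.integral_add i1 i2,
    MeasureTheory.integral_const_mul, MeasureTheory.integral_const_mul,
    integral_exp_norm_sq_mul_inner, gauss_moment2 d hb,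
    GaussianFourier.integral_rexp_neg_mul_sq_norm hb]
  have hrank : ((Module.finrank ℝ (EuclideanSpace ℝ (Fin d))) / 2 : ℝ) = (d : ℝ) / 2 := by
    rw [finrank_euclideanSpace_fin]
  rw [hrank]
  have hC := C_mul_rpow (d := d) hσ
  have h2b : (d : ℝ) / (2 * b) = (d : ℝ) * σ ^ 2 := by
    rw [hbdef]; field_simp
  rw [mul_zero, add_zero]
  linear_combination ((d : ℝ) / (2 * b)) * hC + ‖e - c‖ ^ 2 * hC + h2b

lemma log_gaussPDF (hσ : 0 < σ) (e y : EuclideanSpace ℝ (Fin d)) :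
    Real.log (gaussPDF d σ e y)
      = (-(d : ℝ) / 2) * Real.log (2 * π * σ ^ 2) - (2 * σ ^ 2)⁻¹ * ‖y - e‖ ^ 2 := by
  rw [gaussPDF_eq, Real.log_mul (by positivity) (Real.exp_ne_zero _), Real.log_exp,
    Real.log_rpow (by positivity)]
  ring

lemma gaussPDF_mul_log_gaussPDF_integrable (hσ : 0 < σ) (e e' : EuclideanSpace ℝ (Fin d)) :
    Integrable (fun y => gaussPDF d σ e y * Real.log (gaussPDF d σ e' y)) := by
  have h1 := (gaussPDF_integrable hσ e).const_mul ((-(d : ℝ) / 2) * Real.log (2 * π * σ ^ 2))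
  have h2 := (gaussPDF_mul_sq_integrable hσ e e').const_mul ((2 * σ ^ 2)⁻¹)
  refine (h1.sub h2).congr (Filter.Eventually.of_forall fun y => ?_)
  simp only [Pi.sub_apply]
  rw [log_gaussPDF hσ]
  ring

lemma gaussPDF_mul_log_gaussPDF (hσ : 0 < σ) (e e' : EuclideanSpace ℝ (Fin d)) :
    ∫ y, gaussPDF d σ e y * Real.log (gaussPDF d σ e' y)
      = (-(d : ℝ) / 2) * Real.log (2 * π * σ ^ 2)
        - (2 * σ ^ 2)⁻¹ * ((d : ℝ) * σ ^ 2 + ‖e - e'‖ ^ 2) := by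
  have h1 := (gaussPDF_integrable hσ e).const_mul ((-(d : ℝ) / 2) * Real.log (2 * π * σ ^ 2))
  have h2 := (gaussPDF_mul_sq_integrable hσ e e').const_mul ((2 * σ ^ 2)⁻¹)
  have step : (fun y => gaussPDF d σ e y * Real.log (gaussPDF d σ e' y))
      = fun y => ((-(d : ℝ) / 2) * Real.log (2 * π * σ ^ 2)) * gaussPDF d σ e y
          - (2 * σ ^ 2)⁻¹ * (gaussPDF d σ e y * ‖y - e'‖ ^ 2) := by
    funext y
    rw [log_gaussPDF hσ]
    ring
  rw [step, MeasureTheory.integral_sub h1 h2, MeasureTheory.integral_const_mul,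
    MeasureTheory.integral_const_mul, gaussPDF_integral hσ, gaussPDF_moment hσ, mul_one]

lemma gaussPDF_le (hσ : 0 < σ) (e y : EuclideanSpace ℝ (Fin d)) :
    gaussPDF d σ e y ≤ (2 * π * σ ^ 2) ^ (-(d : ℝ) / 2) := by
  unfold gaussPDF
  have h1 : rexp (-‖y - e‖ ^ 2 / (2 * σ ^ 2)) ≤ 1 := by
    apply Real.exp_le_one_iff.mpr
    apply div_nonpos_of_nonpos_of_nonneg (neg_nonpos.mpr (by positivity)) (by positivity)
  have h2 : (0:ℝ) < (2 * π * σ ^ 2) ^ (-(d : ℝ) / 2) := by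
    have : (0:ℝ) < 2 * π * σ ^ 2 := by positivity
    positivity
  nlinarith

lemma gaussPDF_continuous (hσ : 0 < σ) (e : EuclideanSpace ℝ (Fin d)) :
    Continuous (gaussPDF d σ e) := by
  unfold gaussPDF
  fun_prop

lemma main_aux (d M : ℕ) (σ : ℝ) (hσ : 0 < σ)
    (p : Fin M → ℝ) (hp0 : ∀ m, 0 ≤ p m) (hp1 : ∑ m, p m = 1)
    (e : Fin M → EuclideanSpace ℝ (Fin d)) (Δ : ℝ)
    (hΔ : ∀ m l, ‖e m - e l‖ ≤ Δ) (m0 : Fin M) (hm0 : 0 < p m0) :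
    ∑ m, p m * Real.log (p m + (1 - p m) * rexp (-Δ ^ 2 / (2 * σ ^ 2)))
      + ((-(d : ℝ) / 2) * Real.log (2 * π * σ ^ 2) - (d : ℝ) / 2)
    ≤ ∫ y, (∑ m, p m * gaussPDF d σ (e m) y) *
        Real.log (∑ m, p m * gaussPDF d σ (e m) y) := by
  have hb : (0:ℝ) < (2 * σ ^ 2)⁻¹ := by positivity
  set b : ℝ := (2 * σ ^ 2)⁻¹ with hbdef
  have hΔ0 : 0 ≤ Δ := le_trans (norm_nonneg _) (hΔ m0 m0)
  set EK : ℝ := rexp (-Δ ^ 2 / (2 * σ ^ 2)) with hEK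
  have hEK_pos : 0 < EK := Real.exp_pos _
  have hEK_le1 : EK ≤ 1 := by
    apply Real.exp_le_one_iff.mpr
    apply div_nonpos_of_nonpos_of_nonneg (neg_nonpos.mpr (by positivity)) (by positivity)
  have hp_le1 : ∀ m, p m ≤ 1 := by
    intro m
    calc p m ≤ ∑ l, p l := Finset.single_le_sum (fun l _ => hp0 l) (Finset.mem_univ m)
      _ = 1 := hp1
  have hc_pos : ∀ m, 0 < p m + (1 - p m) * EK := by
    intro m
    nlinarith [hp0 m, hp_le1 m]
  -- weights
  set w : Fin M → Fin M → ℝ := fun m l => if l = m then 1 else EK with hw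
  set κ : Fin M → Fin M → ℝ := fun m l => if l = m then 0 else Δ ^ 2 / (2 * σ ^ 2) with hκ
  set q : Fin M → Fin M → ℝ :=
    fun m l => p l * w m l / (p m + (1 - p m) * EK) with hq
  have hw_pos : ∀ m l, 0 < w m l := by
    intro m l; rw [hw]; dsimp only; split <;> [norm_num; exact hEK_pos]
  have hw_exp : ∀ m l, w m l = rexp (-(κ m l)) := by
    intro m l; rw [hw, hκ]; dsimp only; split
    · rw [neg_zero, Real.exp_zero]
    · rw [hEK, neg_div]
  have hq_nonneg : ∀ m l, 0 ≤ q m l := by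
    intro m l
    rw [hq]; dsimp only
    exact div_nonneg (mul_nonneg (hp0 l) (hw_pos m l).le) (hc_pos m).le
  have hsum_pw : ∀ m, ∑ l, p l * w m l = p m + (1 - p m) * EK := by
    intro m
    have step : ∀ l, p l * w m l = p l * EK + (if l = m then p m * (1 - EK) else 0) := by
      intro l
      rw [hw]; dsimp only
      by_cases h : l = m
      · rw [if_pos h, if_pos h, h]; ring
      · rw [if_neg h, if_neg h]; ring
    rw [Finset.sum_congr rfl (fun l _ => step l), Finset.sum_add_distrib, ← Finset.sum_mul, hp1,
      Finset.sum_ite_eq' Finset.univ m (fun _ => p m * (1 - EK))]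
    simp only [Finset.mem_univ, if_true]
    ring
  have hq_sum : ∀ m, ∑ l, q m l = 1 := by
    intro m
    rw [hq]; dsimp only
    rw [← Finset.sum_div, hsum_pw m, div_self (hc_pos m).ne']
  -- pointwise inequality
  have hpoint : ∀ (m : Fin M) (y : EuclideanSpace ℝ (Fin d)),
      gaussPDF d σ (e m) y * (Real.log (p m + (1 - p m) * EK)
        + ∑ l, q m l * (Real.log (gaussPDF d σ (e l) y) + κ m l))
      ≤ gaussPDF d σ (e m) y *
          Real.log (∑ l, p l * gaussPDF d σ (e l) y) := by
    intro m y
    apply mul_le_mul_of_nonneg_left _ (gaussPDF_pos hσ (e m) y).le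
    set z : Fin M → ℝ := fun l => gaussPDF d σ (e l) y * rexp (κ m l) with hz
    have hz_pos : ∀ l, 0 < z l := fun l =>
      mul_pos (gaussPDF_pos hσ (e l) y) (Real.exp_pos _)
    have hAM := Real.geom_mean_le_arith_mean_weighted Finset.univ (q m) z
      (fun l _ => hq_nonneg m l) (hq_sum m) (fun l _ => (hz_pos l).le)
    have hsum_z : ∑ l, q m l * z l
        = (∑ l, p l * gaussPDF d σ (e l) y) / (p m + (1 - p m) * EK) := by
      rw [Finset.sum_div]
      apply Finset.sum_congr rfl
      intro l _
      rw [hq, hz]; dsimp only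
      rw [hw_exp m l]
      rw [div_mul_eq_mul_div]
      congr 1
      rw [show p l * rexp (-κ m l) * (gaussPDF d σ (e l) y * rexp (κ m l))
          = p l * gaussPDF d σ (e l) y * (rexp (-κ m l) * rexp (κ m l)) by ring,
        ← Real.exp_add, neg_add_cancel, Real.exp_zero, mul_one]
    have hprod : ∏ l, z l ^ (q m l)
        = rexp (∑ l, q m l * (Real.log (gaussPDF d σ (e l) y) + κ m l)) := by
      rw [Real.exp_sum]
      apply Finset.prod_congr rfl
      intro l _
      rw [Real.rpow_def_of_pos (hz_pos l)]
      congr 1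
      rw [hz]; dsimp only
      rw [Real.log_mul (gaussPDF_pos hσ (e l) y).ne' (Real.exp_ne_zero _), Real.log_exp]
      ring
    rw [hsum_z, hprod] at hAM
    have hfy_pos : 0 < ∑ l, p l * gaussPDF d σ (e l) y := by
      apply Finset.sum_pos'
      · exact fun l _ => mul_nonneg (hp0 l) (gaussPDF_pos hσ (e l) y).le
      · exact ⟨m0, Finset.mem_univ m0, mul_pos hm0 (gaussPDF_pos hσ (e m0) y)⟩
    have hlog := Real.log_le_log (Real.exp_pos _) hAM
    rw [Real.log_exp, Real.log_div hfy_pos.ne' (hc_pos m).ne'] at hlog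
    linarith
  -- integrand pieces
  set stuff : Fin M → EuclideanSpace ℝ (Fin d) → ℝ :=
    fun m y => gaussPDF d σ (e m) y * (Real.log (p m + (1 - p m) * EK)
        + ∑ l, q m l * (Real.log (gaussPDF d σ (e l) y) + κ m l)) with hstuff
  have hstuff_int : ∀ m, Integrable (stuff m) := by
    intro m
    have h1 : Integrable (fun y => Real.log (p m + (1 - p m) * EK) * gaussPDF d σ (e m) y
        + ∑ l, q m l * (gaussPDF d σ (e m) y * Real.log (gaussPDF d σ (e l) y)
            + κ m l * gaussPDF d σ (e m) y)) := by
      apply Integrable.add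
      · exact (gaussPDF_integrable hσ (e m)).const_mul _
      · apply integrable_finset_sum
        intro l _
        exact ((gaussPDF_mul_log_gaussPDF_integrable hσ (e m) (e l)).add
          ((gaussPDF_integrable hσ (e m)).const_mul _)).const_mul _
    refine h1.congr (Filter.Eventually.of_forall fun y => ?_)
    rw [hstuff]; dsimp only
    rw [mul_add, Finset.mul_sum]
    congr 1
    · ring
    · apply Finset.sum_congr rfl
      intro l _
      ring
  have hstuff_val : ∀ m, ∫ y, stuff m y
      = Real.log (p m + (1 - p m) * EK)
        + ∑ l, q m l * (((-(d : ℝ) / 2) * Real.log (2 * π * σ ^ 2)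
            - b * ((d : ℝ) * σ ^ 2 + ‖e m - e l‖ ^ 2)) + κ m l) := by
    intro m
    have step : (fun y => stuff m y)
        = fun y => Real.log (p m + (1 - p m) * EK) * gaussPDF d σ (e m) y
            + ∑ l, q m l * (gaussPDF d σ (e m) y * Real.log (gaussPDF d σ (e l) y)
                + κ m l * gaussPDF d σ (e m) y) := by
      funext y
      rw [hstuff]; dsimp only
      rw [mul_add, Finset.mul_sum]
      congr 1
      · ring
      · apply Finset.sum_congr rfl
        intro l _
        ring
    rw [step]
    have int_a : Integrable (fun y : EuclideanSpace ℝ (Fin d) =>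
        Real.log (p m + (1 - p m) * EK) * gaussPDF d σ (e m) y) := by
      exact (gaussPDF_integrable hσ (e m)).const_mul _
    have int_bl : ∀ l : Fin M, Integrable (fun y : EuclideanSpace ℝ (Fin d) =>
        q m l * (gaussPDF d σ (e m) y * Real.log (gaussPDF d σ (e l) y)
          + κ m l * gaussPDF d σ (e m) y)) := by
      intro l
      have hsum : Integrable (fun y : EuclideanSpace ℝ (Fin d) =>
          gaussPDF d σ (e m) y * Real.log (gaussPDF d σ (e l) y)
            + κ m l * gaussPDF d σ (e m) y) := by
        exact (gaussPDF_mul_log_gaussPDF_integrable hσ (e m) (e l)).add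
          ((gaussPDF_integrable hσ (e m)).const_mul _)
      exact hsum.const_mul _
    have int_b : Integrable (fun y : EuclideanSpace ℝ (Fin d) =>
        ∑ l, q m l * (gaussPDF d σ (e m) y * Real.log (gaussPDF d σ (e l) y)
          + κ m l * gaussPDF d σ (e m) y)) :=
      integrable_finset_sum _ (fun l _ => int_bl l)
    rw [MeasureTheory.integral_add int_a int_b]
    rw [MeasureTheory.integral_const_mul, gaussPDF_integral hσ, mul_one]
    congr 1
    rw [integral_finset_sum _ (fun l _ => int_bl l)]
    apply Finset.sum_congr rfl
    intro l _
    have int_c : Integrable (fun y : EuclideanSpace ℝ (Fin d) =>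
        gaussPDF d σ (e m) y * Real.log (gaussPDF d σ (e l) y)) :=
      gaussPDF_mul_log_gaussPDF_integrable hσ (e m) (e l)
    have int_d : Integrable (fun y : EuclideanSpace ℝ (Fin d) =>
        κ m l * gaussPDF d σ (e m) y) := by
      exact (gaussPDF_integrable hσ (e m)).const_mul _
    rw [MeasureTheory.integral_const_mul,
      MeasureTheory.integral_add int_c int_d,
      MeasureTheory.integral_const_mul, gaussPDF_integral hσ, mul_one,
      gaussPDF_mul_log_gaussPDF hσ]
  have hstuff_lb : ∀ m, Real.log (p m + (1 - p m) * EK)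
      + ((-(d : ℝ) / 2) * Real.log (2 * π * σ ^ 2) - (d : ℝ) / 2) ≤ ∫ y, stuff m y := by
    intro m
    rw [hstuff_val m]
    have hbd : b * ((d : ℝ) * σ ^ 2) = (d : ℝ) / 2 := by
      rw [hbdef]; field_simp
    have term_ge : ∀ l, q m l * ((-(d : ℝ) / 2) * Real.log (2 * π * σ ^ 2) - (d : ℝ) / 2)
        ≤ q m l * (((-(d : ℝ) / 2) * Real.log (2 * π * σ ^ 2)
            - b * ((d : ℝ) * σ ^ 2 + ‖e m - e l‖ ^ 2)) + κ m l) := by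
      intro l
      apply mul_le_mul_of_nonneg_left _ (hq_nonneg m l)
      have hκb : b * ‖e m - e l‖ ^ 2 ≤ κ m l := by
        rw [hκ]; dsimp only
        by_cases h : l = m
        · rw [if_pos h, h]
          simp
        · rw [if_neg h]
          have h1 : ‖e m - e l‖ ^ 2 ≤ Δ ^ 2 :=
            pow_le_pow_left₀ (norm_nonneg _) (hΔ m l) 2
          rw [hbdef]
          rw [div_eq_inv_mul]
          exact mul_le_mul_of_nonneg_left h1 (by positivity)
      nlinarith [hq_nonneg m l]
    calc Real.log (p m + (1 - p m) * EK)
        + ((-(d : ℝ) / 2) * Real.log (2 * π * σ ^ 2) - (d : ℝ) / 2)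
        = Real.log (p m + (1 - p m) * EK)
          + ∑ l, q m l * ((-(d : ℝ) / 2) * Real.log (2 * π * σ ^ 2) - (d : ℝ) / 2) := by
          rw [← Finset.sum_mul, hq_sum m, one_mul]
      _ ≤ _ := by
          apply add_le_add_right
          exact Finset.sum_le_sum (fun l _ => term_ge l)
  -- global integrand comparison
  set C : ℝ := (2 * π * σ ^ 2) ^ (-(d : ℝ) / 2) with hC
  have hC_pos : 0 < C := by
    rw [hC]
    have : (0:ℝ) < 2 * π * σ ^ 2 := by positivity
    positivity
  have hf_pos : ∀ y, 0 < ∑ l, p l * gaussPDF d σ (e l) y := by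
    intro y
    apply Finset.sum_pos'
    · exact fun l _ => mul_nonneg (hp0 l) (gaussPDF_pos hσ (e l) y).le
    · exact ⟨m0, Finset.mem_univ m0, mul_pos hm0 (gaussPDF_pos hσ (e m0) y)⟩
  have hf_le : ∀ y, ∑ l, p l * gaussPDF d σ (e l) y ≤ C := by
    intro y
    calc ∑ l, p l * gaussPDF d σ (e l) y ≤ ∑ l, p l * C :=
        Finset.sum_le_sum (fun l _ =>
          mul_le_mul_of_nonneg_left (gaussPDF_le hσ (e l) y) (hp0 l))
      _ = C := by rw [← Finset.sum_mul, hp1, one_mul]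
  have hf_cont : Continuous (fun y => ∑ l, p l * gaussPDF d σ (e l) y) := by
    apply continuous_finset_sum
    exact fun l _ => continuous_const.mul (gaussPDF_continuous hσ (e l))
  have hflog_cont : Continuous (fun y => (∑ l, p l * gaussPDF d σ (e l) y) *
      Real.log (∑ l, p l * gaussPDF d σ (e l) y)) := by
    apply hf_cont.mul
    exact Continuous.log hf_cont (fun y => (hf_pos y).ne')
  have hflogf_int : Integrable (fun y => (∑ l, p l * gaussPDF d σ (e l) y) *
      Real.log (∑ l, p l * gaussPDF d σ (e l) y)) := by
    set c₂ : ℝ := |Real.log C| - Real.log (p m0) with hc₂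
    have hbound_int : Integrable (fun y => ∑ l, p l *
        (c₂ * gaussPDF d σ (e l) y + b * (gaussPDF d σ (e l) y * ‖y - e m0‖ ^ 2))) := by
      apply integrable_finset_sum
      intro l _
      exact (((gaussPDF_integrable hσ (e l)).const_mul c₂).add
        ((gaussPDF_mul_sq_integrable hσ (e l) (e m0)).const_mul b)).const_mul (p l)
    refine hbound_int.mono' hflog_cont.aestronglyMeasurable
      (Filter.Eventually.of_forall fun y => ?_)
    have hfy := hf_pos y
    have hlogC1 : Real.log C ≤ |Real.log C| := le_abs_self _
    have hlogC2 : -|Real.log C| ≤ Real.log C := neg_abs_le _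
    have hlp : Real.log (p m0) ≤ 0 := Real.log_nonpos (hp0 m0) (hp_le1 m0)
    have hbsq : 0 ≤ b * ‖y - e m0‖ ^ 2 := by positivity
    have hup : Real.log (∑ l, p l * gaussPDF d σ (e l) y) ≤ Real.log C :=
      Real.log_le_log (hf_pos y) (hf_le y)
    have hlow : Real.log (p m0) + Real.log C - b * ‖y - e m0‖ ^ 2
        ≤ Real.log (∑ l, p l * gaussPDF d σ (e l) y) := by
      have h1 : p m0 * gaussPDF d σ (e m0) y ≤ ∑ l, p l * gaussPDF d σ (e l) y :=
        Finset.single_le_sum (f := fun l => p l * gaussPDF d σ (e l) y)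
          (fun l _ => mul_nonneg (hp0 l) (gaussPDF_pos hσ (e l) y).le) (Finset.mem_univ m0)
      have h2 := Real.log_le_log (mul_pos hm0 (gaussPDF_pos hσ (e m0) y)) h1
      rw [Real.log_mul hm0.ne' (gaussPDF_pos hσ (e m0) y).ne'] at h2
      rw [log_gaussPDF hσ] at h2
      have hlogC : Real.log C = (-(d : ℝ) / 2) * Real.log (2 * π * σ ^ 2) := by
        rw [hC]; exact Real.log_rpow (by positivity) _
      linarith
    have habs : |Real.log (∑ l, p l * gaussPDF d σ (e l) y)|
        ≤ c₂ + b * ‖y - e m0‖ ^ 2 := by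
      rw [abs_le]
      constructor
      · rw [hc₂]; linarith
      · rw [hc₂]; linarith
    rw [Real.norm_eq_abs, abs_mul, abs_of_pos hfy]
    calc (∑ l, p l * gaussPDF d σ (e l) y) * |Real.log (∑ l, p l * gaussPDF d σ (e l) y)|
        ≤ (∑ l, p l * gaussPDF d σ (e l) y) * (c₂ + b * ‖y - e m0‖ ^ 2) :=
          mul_le_mul_of_nonneg_left habs hfy.le
      _ = ∑ l, p l * (c₂ * gaussPDF d σ (e l) y
            + b * (gaussPDF d σ (e l) y * ‖y - e m0‖ ^ 2)) := by
          rw [Finset.sum_mul]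
          apply Finset.sum_congr rfl
          intro l _
          ring
  -- integral comparison
  have hG_int : Integrable (fun y => ∑ m, p m * stuff m y) :=
    integrable_finset_sum _ (fun m _ => (hstuff_int m).const_mul (p m))
  have hmono : ∫ y, (∑ m, p m * stuff m y)
      ≤ ∫ y, (∑ l, p l * gaussPDF d σ (e l) y) *
          Real.log (∑ l, p l * gaussPDF d σ (e l) y) := by
    apply integral_mono hG_int hflogf_int
    intro y
    calc ∑ m, p m * stuff m y
        ≤ ∑ m, p m * (gaussPDF d σ (e m) y *
            Real.log (∑ l, p l * gaussPDF d σ (e l) y)) :=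
          Finset.sum_le_sum (fun m _ =>
            mul_le_mul_of_nonneg_left (hpoint m y) (hp0 m))
      _ = (∑ l, p l * gaussPDF d σ (e l) y) *
            Real.log (∑ l, p l * gaussPDF d σ (e l) y) := by
          rw [Finset.sum_mul]
          apply Finset.sum_congr rfl
          intro m _
          ring
  have hG_val : ∫ y, (∑ m, p m * stuff m y) = ∑ m, p m * ∫ y, stuff m y := by
    rw [integral_finset_sum _ (fun m _ => (hstuff_int m).const_mul (p m))]
    apply Finset.sum_congr rfl
    intro m _
    rw [MeasureTheory.integral_const_mul]
  have hlb : ∑ m, p m * Real.log (p m + (1 - p m) * EK)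
      + ((-(d : ℝ) / 2) * Real.log (2 * π * σ ^ 2) - (d : ℝ) / 2)
      ≤ ∑ m, p m * ∫ y, stuff m y := by
    calc ∑ m, p m * Real.log (p m + (1 - p m) * EK)
        + ((-(d : ℝ) / 2) * Real.log (2 * π * σ ^ 2) - (d : ℝ) / 2)
        = ∑ m, p m * (Real.log (p m + (1 - p m) * EK)
            + ((-(d : ℝ) / 2) * Real.log (2 * π * σ ^ 2) - (d : ℝ) / 2)) := by
          rw [Finset.sum_congr rfl (fun m _ => mul_add (p m) _ _), Finset.sum_add_distrib,
            ← Finset.sum_mul, hp1, one_mul]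
      _ ≤ ∑ m, p m * ∫ y, stuff m y :=
          Finset.sum_le_sum (fun m _ =>
            mul_le_mul_of_nonneg_left (hstuff_lb m) (hp0 m))
  linarith [hmono, hG_val ▸ hlb]

/-- Mutual information bound for the Gaussian mechanism. Let `Y` be a mixture
of `M` isotropic Gaussians `N(e_m, σ²I)` with weights `p`, let `X ~ p` be the
mixture index, and let `Δ` bound all pairwise distances `‖e_m - e_l‖`. Then
`I(X;Y) = h(Y) - h(Y|X)`, with `h(Y) = -∫ f log f` the differential entropy
of the mixture density `f` and `h(Y|X) = (d/2) log(2πeσ²)`, satisfies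
`I(X;Y) ≤ -Σ_m p_m log(p_m + (1-p_m) exp(-Δ²/(2σ²)))`. -/
theorem gaussian_mixture_mutualInfo_bound (d M : ℕ) (σ : ℝ) (hσ : 0 < σ)
    (p : Fin M → ℝ) (hp0 : ∀ m, 0 ≤ p m) (hp1 : ∑ m, p m = 1)
    (e : Fin M → EuclideanSpace ℝ (Fin d)) (Δ : ℝ)
    (hΔ : ∀ m l, ‖e m - e l‖ ≤ Δ) :
    (-∫ y, (∑ m, p m * gaussPDF d σ (e m) y) *
        Real.log (∑ m, p m * gaussPDF d σ (e m) y))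
      - (d : ℝ) / 2 * Real.log (2 * Real.pi * Real.exp 1 * σ ^ 2) ≤
    -∑ m, p m * Real.log (p m + (1 - p m) * Real.exp (-Δ ^ 2 / (2 * σ ^ 2))) := by
  have hex : ∃ m ∈ Finset.univ, (0:ℝ) < p m := by
    apply Finset.exists_lt_of_sum_lt (f := fun _ => (0:ℝ))
    rw [hp1]
    simp
  obtain ⟨m0, _, hm0⟩ := hex
  have hmain := main_aux d M σ hσ p hp0 hp1 e Δ hΔ m0 hm0
  have hlogE : Real.log (2 * Real.pi * Real.exp 1 * σ ^ 2)
      = Real.log (2 * π * σ ^ 2) + 1 := by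
    rw [show 2 * Real.pi * Real.exp 1 * σ ^ 2 = (2 * π * σ ^ 2) * Real.exp 1 by ring,
      Real.log_mul (by positivity) (Real.exp_ne_zero _), Real.log_exp]
  rw [hlogE]
  linarith [hmain]
end
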